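/- arXiv:2004.09407 — 3 statements merged into one kernel-verified Lean document; each statement's English description precedes it below -/
import Mathlib

section
/- Let n ≥ 1 and let A be a (2n+1)×(2n+1) real matrix whose first 2n rows are linearly independent. Then there exist an orthogonal matrix R ∈ O(2n+1), a row vector g ∈ ℝ^{2n}, an invertible 2n×2n real matrix Ã, and ρ ∈ ℝ such that U(g)·A·R is the block matrix [[Ã, 0],[0, ρ]] (blocks of sizes 2n and 1), where U(g) denotes the block matrix [[I_{2n}, 0],[g, 1]]. -/
open Matrix

/-- Existence part of the weak canonical form (Lemma 3.1):
for a `(2n+1)×(2n+1)` real matrix `A` whose first `2n` rows are linearly independent,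
there exist an orthogonal `R`, a row vector `g`, an invertible `Atilde` and `ρ ∈ ℝ` with
`U(g) * A * R = [[Atilde, 0], [0, ρ]]`, where `U(g) = [[1, 0], [g, 1]]`. -/
theorem weak_canonical_form_exists (n : ℕ) (hn : 1 ≤ n)
    (A : Matrix (Fin (2 * n) ⊕ Fin 1) (Fin (2 * n) ⊕ Fin 1) ℝ)
    (hA : LinearIndependent ℝ (fun i : Fin (2 * n) => A (Sum.inl i))) :
    ∃ (R : Matrix (Fin (2 * n) ⊕ Fin 1) (Fin (2 * n) ⊕ Fin 1) ℝ)
      (g : Fin (2 * n) → ℝ)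
      (Atilde : Matrix (Fin (2 * n)) (Fin (2 * n)) ℝ) (ρ : ℝ),
      Rᵀ * R = 1 ∧ IsUnit Atilde ∧
      (Matrix.fromBlocks 1 0 (Matrix.of fun (_ : Fin 1) j => g j) 1) * A * R
        = Matrix.fromBlocks Atilde 0 0 (Matrix.of fun _ _ => ρ) := by
  classical
  have hι : True := trivial
  let E := EuclideanSpace ℝ (Fin (2 * n) ⊕ Fin 1)
  let r : Fin (2 * n) → E := fun i => WithLp.toLp 2 (A (Sum.inl i))
  have hr : LinearIndependent ℝ r :=
    hA.map' (WithLp.linearEquiv 2 ℝ (Fin (2 * n) ⊕ Fin 1 → ℝ)).symm.toLinearMap (LinearEquiv.ker _)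
  let V : Submodule ℝ E := Submodule.span ℝ (Set.range r)
  have hVne : V ≠ ⊤ := by
    intro h
    have h1 : Module.finrank ℝ V = 2 * n := by
      simpa using finrank_span_eq_card hr
    have h2 : Module.finrank ℝ E = 2 * n + 1 := by
      simp [E]
    rw [h] at h1
    rw [finrank_top] at h1
    omega
  have hVbot : (Vᗮ : Submodule ℝ E) ≠ ⊥ := by
    intro h
    exact hVne (Submodule.orthogonal_eq_bot_iff.mp h)
  obtain ⟨v, hvV, hv0⟩ := Submodule.exists_mem_ne_zero_of_ne_bot hVbot
  let e : E := ‖v‖⁻¹ • v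
  have he : e ∈ Vᗮ := Submodule.smul_mem _ _ hvV
  have hne : ‖e‖ = 1 := by
    simp [e, norm_smul, abs_norm, inv_mul_cancel₀ (norm_ne_zero_iff.mpr hv0)]
    rw [abs_norm]; exact inv_mul_cancel₀ (norm_ne_zero_iff.mpr hv0)
  let x : E := (EuclideanSpace.single (Sum.inr 0) (1 : ℝ) : E)
  have hnx : ‖x‖ = 1 := by
    rw [show x = EuclideanSpace.single (Sum.inr 0) (1:ℝ) from rfl, EuclideanSpace.norm_single]
    norm_num
  let f : E ≃ₗᵢ[ℝ] E := Submodule.reflection (ℝ ∙ (x - e))ᗮ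
  have hfx : f x = e := Submodule.reflection_sub (by rw [hnx, hne])
  let R : Matrix (Fin (2 * n) ⊕ Fin 1) (Fin (2 * n) ⊕ Fin 1) ℝ := Matrix.of fun j k => f (EuclideanSpace.single k (1:ℝ)) j
  have hRorth : Rᵀ * R = 1 := by
    ext k l
    have h1 : (inner ℝ (f (EuclideanSpace.single k 1)) (f (EuclideanSpace.single l 1)) : ℝ)
        = inner ℝ (EuclideanSpace.single k (1:ℝ)) (EuclideanSpace.single l (1:ℝ)) :=
      f.inner_map_map _ _
    rw [PiLp.inner_apply] at h1
    simp only [RCLike.inner_apply, conj_trivial] at h1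
    simp only [Matrix.mul_apply, Matrix.transpose_apply, Matrix.of_apply, R]
    rw [← Finset.sum_congr rfl (fun x _ => mul_comm ((f (EuclideanSpace.single l 1)).ofLp x)
      ((f (EuclideanSpace.single k 1)).ofLp x)), h1, EuclideanSpace.inner_single_left]
    simp [EuclideanSpace.single_apply, Matrix.one_apply, eq_comm]
  -- last column of R is e
  have hRlast : ∀ j, R j (Sum.inr 0) = e j := fun j => congrArg (fun w : E => w j) hfx
  -- top-right block of A * R vanishes
  have hB0 : ∀ (i : Fin (2 * n)) (j : Fin 1), (A * R) (Sum.inl i) (Sum.inr j) = 0 := by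
    intro i j
    have hj : j = 0 := Subsingleton.elim _ _
    subst hj
    have hri : r i ∈ V := Submodule.subset_span ⟨i, rfl⟩
    have hinner : (inner ℝ (r i) e : ℝ) = 0 :=
      (Submodule.mem_orthogonal V e).mp he (r i) hri
    rw [PiLp.inner_apply] at hinner
    simp only [RCLike.inner_apply, conj_trivial] at hinner
    rw [Matrix.mul_apply]
    calc ∑ k, A (Sum.inl i) k * R k (Sum.inr 0)
        = ∑ k, r i k * e k := by
          refine Finset.sum_congr rfl fun k _ => ?_
          rw [hRlast k]
      _ = 0 := by rw [← hinner]; exact Finset.sum_congr rfl fun k _ => mul_comm _ _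
  -- R is a unit
  have hRunit : IsUnit R :=
    (Matrix.isUnit_iff_isUnit_det R).mpr (Matrix.isUnit_det_of_left_inverse hRorth)
  -- rows of A * R are linearly independent
  have hinj : Function.Injective ⇑R.vecMulLinear := by
    rw [Matrix.coe_vecMulLinear]
    exact Matrix.vecMul_injective_iff_isUnit.mpr hRunit
  have hBrows : LinearIndependent ℝ (fun i : Fin (2 * n) => (A * R) (Sum.inl i)) := by
    have h1 := hA.map' R.vecMulLinear (LinearMap.ker_eq_bot.mpr hinj)
    have h2 : (⇑R.vecMulLinear ∘ fun i : Fin (2 * n) => A (Sum.inl i))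
        = fun i : Fin (2 * n) => (A * R) (Sum.inl i) := by
      funext i j
      simp [Matrix.vecMulLinear, Matrix.vecMul, Matrix.mul_apply, dotProduct]
    rwa [h2] at h1
  -- the top-left block
  set Atl : Matrix (Fin (2 * n)) (Fin (2 * n)) ℝ := (A * R).toBlocks₁₁ with hAtl
  have hAtlrows : LinearIndependent ℝ (fun i : Fin (2 * n) => Atl i) := by
    rw [Fintype.linearIndependent_iff]
    intro c hc
    rw [Fintype.linearIndependent_iff] at hBrows
    apply hBrows c
    funext j
    rcases j with j | j
    · have := congrFun hc j
      simpa [Matrix.toBlocks₁₁, hAtl] using this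
    · simp only [Finset.sum_apply, Pi.smul_apply, smul_eq_mul]
      rw [Finset.sum_eq_zero]
      · rfl
      · intro i _
        rw [hB0 i j, mul_zero]
  have hAtlUnit : IsUnit Atl := Matrix.linearIndependent_rows_iff_isUnit.mp hAtlrows
  -- remaining blocks
  set bb : Matrix (Fin 1) (Fin (2 * n)) ℝ := (A * R).toBlocks₂₁ with hbb
  set D : Matrix (Fin 1) (Fin 1) ℝ := (A * R).toBlocks₂₂ with hD
  have hblocks : A * R = Matrix.fromBlocks Atl 0 bb D := by
    have h12 : (A * R).toBlocks₁₂ = 0 := by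
      ext i j
      exact hB0 i j
    conv_lhs => rw [← Matrix.fromBlocks_toBlocks (A * R)]
    rw [h12]
  refine ⟨R, fun j => (-(bb * Atl⁻¹)) 0 j, Atl, D 0 0,
    hRorth, hAtlUnit, ?_⟩
  have hG : (Matrix.of fun (_ : Fin 1) j => (-(bb * Atl⁻¹)) 0 j) = -(bb * Atl⁻¹) := by
    ext i j
    have : i = 0 := Subsingleton.elim _ _
    subst this
    rfl
  rw [Matrix.mul_assoc, hblocks, hG, Matrix.fromBlocks_multiply]
  have hinv : Atl⁻¹ * Atl = 1 :=
    Matrix.nonsing_inv_mul Atl ((Matrix.isUnit_iff_isUnit_det Atl).mp hAtlUnit)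
  have hzero : -(bb * Atl⁻¹) * Atl + (1 : Matrix (Fin 1) (Fin 1) ℝ) * bb
      = (0 : Matrix (Fin 1) (Fin (2 * n)) ℝ) := by
    rw [Matrix.one_mul, Matrix.neg_mul, Matrix.mul_assoc, hinv, Matrix.mul_one, neg_add_cancel]
  have hDeq : -(bb * Atl⁻¹) * (0 : Matrix (Fin (2 * n)) (Fin 1) ℝ)
        + (1 : Matrix (Fin 1) (Fin 1) ℝ) * D
      = Matrix.of fun (_ : Fin 1) (_ : Fin 1) => D 0 0 := by
    rw [Matrix.mul_zero, Matrix.one_mul, zero_add]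
    ext i j
    have hi : i = 0 := Subsingleton.elim _ _
    have hj : j = 0 := Subsingleton.elim _ _
    subst hi; subst hj
    rfl
  rw [hzero, hDeq, Matrix.one_mul, Matrix.zero_mul, add_zero, Matrix.one_mul,
    Matrix.zero_mul, add_zero]
end

section
/- Let n ≥ 1 and let A be a (2n+1)×(2n+1) real matrix whose first 2n rows are linearly independent. Suppose R, R' ∈ O(2n+1), g, g' ∈ ℝ^{2n}, invertible 2n×2n matrices Ã, Ã', and ρ, ρ' ∈ ℝ satisfy U(g)·A·R = [[Ã,0],[0,ρ]] and U(g')·A·R' = [[Ã',0],[0,ρ']] (block sizes 2n and 1). Then g = g', and there exist an orthogonal matrix R̃ ∈ O(2n) and a sign ε ∈ {1,−1} such that ᵗR·R' = [[R̃,0],[0,ε]], Ã' = Ã·R̃, and ρ' = ε·ρ; in particular |ρ'| = |ρ|. -/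
open Matrix

/-- Uniqueness part of the weak canonical form (Lemma 3.1): if
`U(g) * A * R = [[Atilde,0],[0,ρ]]` and `U(g') * A * R' = [[Atilde',0],[0,ρ']]`
with `R, R'` orthogonal and `Atilde, Atilde'` invertible, then `g = g'` and
`Rᵀ * R' = [[Rtilde,0],[0,ε]]` for some orthogonal `Rtilde` and sign `ε = ±1`,
with `Atilde' = Atilde * Rtilde` and `ρ' = ε * ρ`; in particular `|ρ'| = |ρ|`. -/
theorem weak_canonical_form_unique (n : ℕ) (hn : 1 ≤ n)
    (A : Matrix (Fin (2 * n) ⊕ Fin 1) (Fin (2 * n) ⊕ Fin 1) ℝ)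
    (hA : LinearIndependent ℝ (fun i : Fin (2 * n) => A (Sum.inl i)))
    (R R' : Matrix (Fin (2 * n) ⊕ Fin 1) (Fin (2 * n) ⊕ Fin 1) ℝ)
    (hR : Rᵀ * R = 1) (hR' : R'ᵀ * R' = 1)
    (g g' : Fin (2 * n) → ℝ)
    (Atilde Atilde' : Matrix (Fin (2 * n)) (Fin (2 * n)) ℝ)
    (hAtilde : IsUnit Atilde) (hAtilde' : IsUnit Atilde')
    (ρ ρ' : ℝ)
    (heq : (Matrix.fromBlocks 1 0 (Matrix.of fun (_ : Fin 1) j => g j) 1) * A * R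
        = Matrix.fromBlocks Atilde 0 0 (Matrix.of fun _ _ => ρ))
    (heq' : (Matrix.fromBlocks 1 0 (Matrix.of fun (_ : Fin 1) j => g' j) 1) * A * R'
        = Matrix.fromBlocks Atilde' 0 0 (Matrix.of fun _ _ => ρ')) :
    g = g' ∧
    ∃ (Rtilde : Matrix (Fin (2 * n)) (Fin (2 * n)) ℝ) (ε : ℝ),
      Rtildeᵀ * Rtilde = 1 ∧ (ε = 1 ∨ ε = -1) ∧
      Rᵀ * R' = Matrix.fromBlocks Rtilde 0 0 (Matrix.of fun _ _ => ε) ∧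
      Atilde' = Atilde * Rtilde ∧ ρ' = ε * ρ ∧ |ρ'| = |ρ| := by
  classical
  set B : Matrix (Fin (2*n) ⊕ Fin 1) (Fin (2*n) ⊕ Fin 1) ℝ :=
    Matrix.fromBlocks Atilde 0 0 (Matrix.of fun _ _ => ρ) with hB
  set B' : Matrix (Fin (2*n) ⊕ Fin 1) (Fin (2*n) ⊕ Fin 1) ℝ :=
    Matrix.fromBlocks Atilde' 0 0 (Matrix.of fun _ _ => ρ') with hB'
  set U : Matrix (Fin (2*n) ⊕ Fin 1) (Fin (2*n) ⊕ Fin 1) ℝ :=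
    Matrix.fromBlocks 1 0 (Matrix.of fun (_ : Fin 1) j => g j) 1 with hU
  set U' : Matrix (Fin (2*n) ⊕ Fin 1) (Fin (2*n) ⊕ Fin 1) ℝ :=
    Matrix.fromBlocks 1 0 (Matrix.of fun (_ : Fin 1) j => g' j) 1 with hU'
  set Ui : Matrix (Fin (2*n) ⊕ Fin 1) (Fin (2*n) ⊕ Fin 1) ℝ :=
    Matrix.fromBlocks 1 0 (Matrix.of fun (_ : Fin 1) j => -g j) 1 with hUi
  have hUiU : Ui * U = 1 := by
    rw [hUi, hU]
    ext i j
    rw [Matrix.fromBlocks_multiply]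
    rcases i with i | i <;> rcases j with j | j <;> simp [Matrix.one_apply]
  have hRRt : R * Rᵀ = 1 := mul_eq_one_comm.mp hR
  have hAeq : A = Ui * B * Rᵀ := by
    have h1 : A * R = Ui * B := by
      calc A * R = (Ui * U) * (A * R) := by rw [hUiU, one_mul]
      _ = Ui * (U * A * R) := by rw [mul_assoc Ui U (A * R), mul_assoc U A R]
      _ = Ui * B := by rw [heq]
    calc A = A * (R * Rᵀ) := by rw [hRRt, mul_one]
    _ = (A * R) * Rᵀ := by rw [mul_assoc]
    _ = Ui * B * Rᵀ := by rw [h1]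
  set h : Fin (2*n) → ℝ := fun j => g' j - g j with hh
  set S : Matrix (Fin (2*n) ⊕ Fin 1) (Fin (2*n) ⊕ Fin 1) ℝ := Rᵀ * R' with hS
  have hUh : U' * Ui = Matrix.fromBlocks 1 0 (Matrix.of fun (_ : Fin 1) j => h j) 1 := by
    rw [hU', hUi]
    ext i j
    rw [Matrix.fromBlocks_multiply]
    rcases i with i | i <;> rcases j with j | j <;> simp [Matrix.one_apply, hh] <;> ring
  have key : (Matrix.fromBlocks 1 0 (Matrix.of fun (_ : Fin 1) j => h j) 1) * B * S = B' := by
    rw [← hUh]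
    calc U' * Ui * B * S = U' * (Ui * B * Rᵀ) * R' := by rw [hS]; simp only [mul_assoc]
    _ = B' := by rw [← hAeq]; exact heq'
  set S11 := S.toBlocks₁₁ with hS11
  set S12 := S.toBlocks₁₂ with hS12d
  set S21 := S.toBlocks₂₁ with hS21d
  set S22 := S.toBlocks₂₂ with hS22d
  have hSblocks : S = fromBlocks S11 S12 S21 S22 := (fromBlocks_toBlocks S).symm
  have key2 : fromBlocks (Atilde * S11) (Atilde * S12)
      ((Matrix.of fun (_ : Fin 1) j => h j) * (Atilde * S11) + (Matrix.of fun _ _ => ρ) * S21)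
      ((Matrix.of fun (_ : Fin 1) j => h j) * (Atilde * S12) + (Matrix.of fun _ _ => ρ) * S22)
      = fromBlocks Atilde' 0 0 (Matrix.of fun _ _ => ρ') := by
    rw [← hB', ← key, hB, hSblocks, Matrix.fromBlocks_multiply, Matrix.fromBlocks_multiply]
    simp [mul_assoc]
    exact ⟨by simp only [Matrix.mul_assoc] <;> rfl, by simp only [Matrix.mul_assoc] <;> rfl⟩
  have e11 : Atilde * S11 = Atilde' := by
    have := congrArg Matrix.toBlocks₁₁ key2
    simpa [Matrix.toBlocks_fromBlocks₁₁] using this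
  have e12 : Atilde * S12 = 0 := by
    have := congrArg Matrix.toBlocks₁₂ key2
    simpa [Matrix.toBlocks_fromBlocks₁₂] using this
  have e21 : (Matrix.of fun (_ : Fin 1) j => h j) * (Atilde * S11)
      + (Matrix.of fun _ _ => ρ) * S21 = 0 := by
    have := congrArg Matrix.toBlocks₂₁ key2
    simpa [Matrix.toBlocks_fromBlocks₂₁] using this
  have e22 : (Matrix.of fun (_ : Fin 1) j => h j) * (Atilde * S12)
      + (Matrix.of fun _ _ => ρ) * S22 = (Matrix.of fun _ _ => ρ' : Matrix (Fin 1) (Fin 1) ℝ) := by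
    have := congrArg Matrix.toBlocks₂₂ key2
    simpa [Matrix.toBlocks_fromBlocks₂₂] using this
  have hS12 : S12 = 0 := by
    have h0 : Atilde⁻¹ * (Atilde * S12) = S12 := by
      rw [← Matrix.mul_assoc, nonsing_inv_mul _ ((isUnit_iff_isUnit_det _).mp hAtilde),
        Matrix.one_mul]
    rw [← h0, e12, Matrix.mul_zero]
  have hStS : Sᵀ * S = 1 := by
    rw [hS, transpose_mul, transpose_transpose, mul_assoc, ← mul_assoc R, hRRt, one_mul, hR']
  have hSSt : S * Sᵀ = 1 := mul_eq_one_comm.mp hStS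
  have hSSt2 : fromBlocks (S11 * S11ᵀ + S12 * S12ᵀ) (S11 * S21ᵀ + S12 * S22ᵀ)
      (S21 * S11ᵀ + S22 * S12ᵀ) (S21 * S21ᵀ + S22 * S22ᵀ) = fromBlocks 1 0 0 1 := by
    rw [Matrix.fromBlocks_one, ← hSSt]
    nth_rewrite 1 [hSblocks]
    nth_rewrite 1 [hSblocks]
    rw [fromBlocks_transpose, Matrix.fromBlocks_multiply]
  have f11 : S11 * S11ᵀ + S12 * S12ᵀ = 1 := by
    have := congrArg Matrix.toBlocks₁₁ hSSt2
    simpa [-Matrix.fromBlocks_one, Matrix.toBlocks_fromBlocks₁₁] using this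
  have f12 : S11 * S21ᵀ + S12 * S22ᵀ = 0 := by
    have := congrArg Matrix.toBlocks₁₂ hSSt2
    simpa [-Matrix.fromBlocks_one, Matrix.toBlocks_fromBlocks₁₂] using this
  have f22 : S21 * S21ᵀ + S22 * S22ᵀ = 1 := by
    have := congrArg Matrix.toBlocks₂₂ hSSt2
    simpa [-Matrix.fromBlocks_one, Matrix.toBlocks_fromBlocks₂₂] using this
  have hS11o : S11 * S11ᵀ = 1 := by rwa [hS12, Matrix.zero_mul, add_zero] at f11
  have hS11u : IsUnit S11 := ⟨⟨S11, S11ᵀ, hS11o, mul_eq_one_comm.mp hS11o⟩, rfl⟩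
  have hS21 : S21 = 0 := by
    have h1 : S11 * S21ᵀ = 0 := by rwa [hS12, Matrix.zero_mul, add_zero] at f12
    have h2 : S21ᵀ = 0 := by
      have h0 : S11⁻¹ * (S11 * S21ᵀ) = S21ᵀ := by
        rw [← Matrix.mul_assoc, nonsing_inv_mul _ ((isUnit_iff_isUnit_det _).mp hS11u),
          Matrix.one_mul]
      rw [← h0, h1, Matrix.mul_zero]
    rw [← transpose_transpose S21, h2, transpose_zero]
  have hS22o : S22 * S22ᵀ = 1 := by rwa [hS21, Matrix.zero_mul, zero_add] at f22
  set ε : ℝ := S22 0 0 with hε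
  have hS22e : S22 = Matrix.of fun _ _ => ε := by
    ext i j
    have hi : i = 0 := Subsingleton.elim _ _
    have hj : j = 0 := Subsingleton.elim _ _
    subst hi; subst hj; rfl
  have hε2 : ε * ε = 1 := by
    have := congrFun (congrFun hS22o 0) 0
    simpa [Matrix.mul_apply, Fin.sum_univ_one, Matrix.one_apply] using this
  have hεpm : ε = 1 ∨ ε = -1 := mul_self_eq_one_iff.mp hε2
  have hAS11u : IsUnit (Atilde * S11) := hAtilde.mul hS11u
  have hgg : g = g' := by
    have h1 : (Matrix.of fun (_ : Fin 1) j => h j) * (Atilde * S11) = 0 := by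
      have e21' : (Matrix.of fun (_ : Fin 1) j => h j) * (Atilde * S11)
          + (Matrix.of fun _ _ => ρ : Matrix (Fin 1) (Fin 1) ℝ) * S21 = 0 := e21
      rwa [hS21, Matrix.mul_zero, add_zero] at e21'
    have h2 : (Matrix.of fun (_ : Fin 1) j => h j) = 0 := by
      have h0 : (Matrix.of fun (_ : Fin 1) j => h j) * ((Atilde * S11) * (Atilde * S11)⁻¹)
          = Matrix.of fun (_ : Fin 1) j => h j := by
        rw [mul_nonsing_inv _ ((isUnit_iff_isUnit_det _).mp hAS11u), Matrix.mul_one]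
      rw [← h0, ← Matrix.mul_assoc, h1, Matrix.zero_mul]
    funext j
    have := congrFun (congrFun h2 0) j
    simp [hh] at this
    linarith
  have hρ' : ρ' = ε * ρ := by
    have h1 : (Matrix.of fun _ _ => ρ : Matrix (Fin 1) (Fin 1) ℝ) * S22
        = (Matrix.of fun _ _ => ρ' : Matrix (Fin 1) (Fin 1) ℝ) := by
      rwa [hS12, Matrix.mul_zero, Matrix.mul_zero, zero_add] at e22
    have := congrFun (congrFun h1 0) 0
    simp [Matrix.mul_apply, Fin.sum_univ_one] at this
    rw [← this]; ring
  refine ⟨hgg, S11, ε, mul_eq_one_comm.mp hS11o, hεpm, ?_, e11.symm, hρ', ?_⟩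
  · rw [hSblocks, hS12, hS21, hS22e]
  · rw [hρ', abs_mul]
    rcases hεpm with hh1 | hh1 <;> simp [hh1]
end

section
/- Let n ≥ 1, let d_1, …, d_n be nonzero reals, ρ ∈ ℝ, p_z a nonzero real, and p_{x,1}, …, p_{x,n}, p_{y,1}, …, p_{y,n} ∈ ℝ. Set ξ_i = p_z·d_i, and define for t ∈ ℝ: h_{x,i}(t) = p_{x,i}·cos(ξ_i t) − p_{y,i}·sin(ξ_i t), h_{y,i}(t) = p_{x,i}·sin(ξ_i t) + p_{y,i}·cos(ξ_i t), x_i(t) = (1/ξ_i)·(p_{x,i}·sin(ξ_i t) + p_{y,i}·(cos(ξ_i t) − 1)), y_i(t) = (1/ξ_i)·(p_{x,i}·(1 − cos(ξ_i t)) + p_{y,i}·sin(ξ_i t)), and z(t) = ρ²·p_z·t + (1/2)·∑_{i=1}^{n} (d_i·t/ξ_i − (d_i/ξ_i²)·sin(ξ_i t))·(p_{x,i}² + p_{y,i}²). Then x_i(0) = y_i(0) = z(0) = 0, h_{x,i}(0) = p_{x,i}, h_{y,i}(0) = p_{y,i}, and for all t ∈ ℝ: x_i'(t) = h_{x,i}(t),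 y_i'(t) = h_{y,i}(t), h_{x,i}'(t) = −ξ_i·h_{y,i}(t), h_{y,i}'(t) = ξ_i·h_{x,i}(t), and z'(t) = (1/2)·∑_{i=1}^{n} d_i·(x_i(t)·h_{y,i}(t) − y_i(t)·h_{x,i}(t)) + ρ²·p_z. -/
private lemma hsin (a t : ℝ) :
    HasDerivAt (fun s => Real.sin (a * s)) (Real.cos (a * t) * a) t := by
  have h : HasDerivAt (fun s : ℝ => a * s) a t := by
    simpa using (hasDerivAt_id t).const_mul a
  exact (Real.hasDerivAt_sin (a * t)).comp t h

private lemma hcos (a t : ℝ) :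
    HasDerivAt (fun s => Real.cos (a * s)) (-Real.sin (a * t) * a) t := by
  have h : HasDerivAt (fun s : ℝ => a * s) a t := by
    simpa using (hasDerivAt_id t).const_mul a
  exact (Real.hasDerivAt_cos (a * t)).comp t h

/-- Verification of the explicit geodesic parametrization (Lemma 'lemgeod', case
`p_z ≠ 0`): the explicit functions `x_i, y_i, z, h_{x,i}, h_{y,i}` satisfy the
Hamiltonian system of the Heisenberg group with the given initial conditions. -/
theorem heisenberg_geodesic_parametrization (n : ℕ) (hn : 1 ≤ n)
    (d : Fin n → ℝ) (hd : ∀ i, d i ≠ 0)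
    (ρ pz : ℝ) (hpz : pz ≠ 0)
    (px py : Fin n → ℝ)
    (ξ : Fin n → ℝ) (hξ : ∀ i, ξ i = pz * d i)
    (hX hY x y : Fin n → ℝ → ℝ) (z : ℝ → ℝ)
    (hhX : ∀ i t, hX i t = px i * Real.cos (ξ i * t) - py i * Real.sin (ξ i * t))
    (hhY : ∀ i t, hY i t = px i * Real.sin (ξ i * t) + py i * Real.cos (ξ i * t))
    (hx : ∀ i t, x i t =
      (1 / ξ i) * (px i * Real.sin (ξ i * t) + py i * (Real.cos (ξ i * t) - 1)))
    (hy : ∀ i t, y i t =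
      (1 / ξ i) * (px i * (1 - Real.cos (ξ i * t)) + py i * Real.sin (ξ i * t)))
    (hz : ∀ t, z t = ρ ^ 2 * pz * t +
      (1 / 2) * ∑ i, (d i * t / ξ i - (d i / (ξ i) ^ 2) * Real.sin (ξ i * t)) *
        ((px i) ^ 2 + (py i) ^ 2)) :
    (∀ i, x i 0 = 0) ∧ (∀ i, y i 0 = 0) ∧ z 0 = 0 ∧
    (∀ i, hX i 0 = px i) ∧ (∀ i, hY i 0 = py i) ∧
    (∀ i t, HasDerivAt (x i) (hX i t) t) ∧
    (∀ i t, HasDerivAt (y i) (hY i t) t) ∧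
    (∀ i t, HasDerivAt (hX i) (-(ξ i) * hY i t) t) ∧
    (∀ i t, HasDerivAt (hY i) (ξ i * hX i t) t) ∧
    (∀ t, HasDerivAt z
      ((1 / 2) * ∑ i, d i * (x i t * hY i t - y i t * hX i t) + ρ ^ 2 * pz) t) := by
  have hξne : ∀ i, ξ i ≠ 0 := fun i => by rw [hξ i]; exact mul_ne_zero hpz (hd i)
  refine ⟨fun i => by simp [hx], fun i => by simp [hy], by simp [hz],
    fun i => by simp [hhX], fun i => by simp [hhY], ?_, ?_, ?_, ?_, ?_⟩
  · intro i t
    have hfe : x i = fun s => (1 / ξ i) *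
        (px i * Real.sin (ξ i * s) + py i * (Real.cos (ξ i * s) - 1)) :=
      funext (hx i)
    rw [hfe, hhX]
    have H := ((((hsin (ξ i) t).const_mul (px i)).fun_add
      (((hcos (ξ i) t).sub_const 1).const_mul (py i))).const_mul (1 / ξ i))
    refine H.congr_deriv (Eq.symm ?_)
    field_simp [hξne i]
    ring
  · intro i t
    have hfe : y i = fun s => (1 / ξ i) *
        (px i * (1 - Real.cos (ξ i * s)) + py i * Real.sin (ξ i * s)) :=
      funext (hy i)
    rw [hfe, hhY]
    have H := ((((hcos (ξ i) t).const_sub 1).const_mul (px i)).fun_add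
      ((hsin (ξ i) t).const_mul (py i))).const_mul (1 / ξ i)
    refine H.congr_deriv (Eq.symm ?_)
    field_simp [hξne i]
  · intro i t
    have hfe : hX i = fun s => px i * Real.cos (ξ i * s) - py i * Real.sin (ξ i * s) :=
      funext (hhX i)
    rw [hfe, hhY]
    have H := ((hcos (ξ i) t).const_mul (px i)).fun_sub ((hsin (ξ i) t).const_mul (py i))
    refine H.congr_deriv (Eq.symm ?_)
    ring
  · intro i t
    have hfe : hY i = fun s => px i * Real.sin (ξ i * s) + py i * Real.cos (ξ i * s) :=
      funext (hhY i)
    rw [hfe, hhX]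
    have H := ((hsin (ξ i) t).const_mul (px i)).fun_add ((hcos (ξ i) t).const_mul (py i))
    refine H.congr_deriv (Eq.symm ?_)
    ring
  · intro t
    have hfe : z = fun s => ρ ^ 2 * pz * s +
        (1 / 2) * ∑ i, (d i * s / ξ i - (d i / (ξ i) ^ 2) * Real.sin (ξ i * s)) *
          ((px i) ^ 2 + (py i) ^ 2) := funext hz
    rw [hfe]
    have Hsum : HasDerivAt (fun s => ∑ i : Fin n,
        (d i * s / ξ i - (d i / (ξ i) ^ 2) * Real.sin (ξ i * s)) *
          ((px i) ^ 2 + (py i) ^ 2))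
        (∑ i : Fin n, (d i / ξ i - (d i / (ξ i) ^ 2) * (Real.cos (ξ i * t) * ξ i)) *
          ((px i) ^ 2 + (py i) ^ 2)) t := by
      apply HasDerivAt.fun_sum
      intro i _
      have h1 : HasDerivAt (fun s : ℝ => d i * s / ξ i) (d i / ξ i) t := by
        have := ((hasDerivAt_id t).const_mul (d i)).div_const (ξ i)
        simpa using this
      exact (h1.fun_sub ((hsin (ξ i) t).const_mul (d i / (ξ i) ^ 2))).mul_const _
    have H := (((hasDerivAt_id t).const_mul (ρ ^ 2 * pz)).fun_add (Hsum.const_mul (1 / 2)))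
    refine H.congr_deriv (Eq.symm ?_)
    simp only [mul_one]
    rw [add_comm]
    congr 1
    congr 1
    apply Finset.sum_congr rfl
    intro i _
    rw [hhX, hhY, hx, hy]
    have hs2 := Real.sin_sq_add_cos_sq (ξ i * t)
    field_simp [hξne i]
    linear_combination (d i * (px i ^ 2 + py i ^ 2)) * hs2
end
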